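/- Let A be a connected Γ-graded bialgebra as above and μ ∈ ℝ ∪ {∞}. Let A_{[μ]} be the span of semistable homogeneous elements of slope μ (i.e., homogeneous a with |a| ∈ Γ_μ and L(a) ⊂ Γ_{≤μ}). Then A_{[μ]} is a subalgebra of A, and the map Δ_μ = (p_μ ⊗ p_μ) ∘ Δ (where p_μ is the projection onto the slope-μ part A_μ) maps A_{[μ]} into A_{[μ]} ⊗ A_{[μ]}, making A_{[μ]} a bialgebra with coproduct Δ_μ. -/

import Mathlib

open scoped TensorProduct
open TensorProduct

noncomputable section

namespace MVPaper

variable {k A : Type} [Field k] [Ring A] [Bialgebra k A]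
variable {ι : Type} [AddCommMonoid ι] [DecidableEq ι]
variable (𝒜 : ι → Submodule k A) [DirectSum.Decomposition 𝒜]

/-- The projection of `A` onto its degree-`γ` homogeneous component. -/
def proj (γ : ι) : A →ₗ[k] A :=
  (𝒜 γ).subtype ∘ₗ (DirectSum.component k ι (fun i => 𝒜 i) γ) ∘ₗ
    (DirectSum.decomposeLinearEquiv 𝒜).toLinearMap

/-- The projection of `A ⊗ A` onto its bidegree-`(β, γ)` homogeneous component. -/
def projT (β γ : ι) : A ⊗[k] A →ₗ[k] A ⊗[k] A :=
  TensorProduct.map (proj 𝒜 β) (proj 𝒜 γ)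

/-- `L(a)`: the set of left degrees appearing in the coproduct of `a`. -/
def Lset (a : A) : Set ι :=
  {β | ∃ γ, projT 𝒜 β γ (Coalgebra.comul (R := k) a) ≠ 0}

/-- `R(a)`: the set of right degrees appearing in the coproduct of `a`. -/
def Rset (a : A) : Set ι :=
  {γ | ∃ β, projT 𝒜 β γ (Coalgebra.comul (R := k) a) ≠ 0}

/-- The coproduct respects the grading. -/
def ComulGraded : Prop :=
  ∀ (γ : ι), ∀ a ∈ 𝒜 γ, ∀ β δ : ι, β + δ ≠ γ →
    projT 𝒜 β δ (Coalgebra.comul (R := k) a) = 0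

/-- The coproduct of any element is the (finite) sum of its homogeneous components. -/
def ComulDecomposes : Prop :=
  ∀ a : A, ∃ S : Finset (ι × ι),
    Coalgebra.comul (R := k) a = ∑ p ∈ S, projT 𝒜 p.1 p.2 (Coalgebra.comul (R := k) a)

/-- Connectedness: the degree-`0` component is spanned by the unit. -/
def GradedConnected : Prop := 𝒜 0 = Submodule.span k {(1 : A)}

end MVPaper

namespace MVPaper

variable {k A : Type} [Field k] [Ring A] [Bialgebra k A]
variable {Γ : AddSubmonoid (ℝ × ℝ)} [DecidableEq Γ]
variable (𝒜 : Γ → Submodule k A) [DirectSum.Decomposition 𝒜]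

/-- `Γ` is contained in the right half-plane. -/
def HalfPlane (Γ : AddSubmonoid (ℝ × ℝ)) : Prop :=
  ∀ γ ∈ Γ, 0 < γ.1 ∨ (γ.1 = 0 ∧ 0 ≤ γ.2)

/-- The slope `d/r` of a point `(r, d)` of the right half-plane, with `∞` for `r = 0`. -/
def slope (v : ℝ × ℝ) : WithTop ℝ :=
  if v.1 = 0 then ⊤ else (v.2 / v.1 : ℝ)

/-- Membership in `Γ_μ`. -/
def memSlope (μ : WithTop ℝ) (γ : Γ) : Prop :=
  (γ : ℝ × ℝ) = 0 ∨ slope (γ : ℝ × ℝ) = μ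

/-- Membership in `Γ_{≤μ}`. -/
def memSlopeLE (μ : WithTop ℝ) (γ : Γ) : Prop :=
  (γ : ℝ × ℝ) = 0 ∨ slope (γ : ℝ × ℝ) ≤ μ

/-- Membership in `Γ_{≥μ}`. -/
def memSlopeGE (μ : WithTop ℝ) (γ : Γ) : Prop :=
  (γ : ℝ × ℝ) = 0 ∨ μ ≤ slope (γ : ℝ × ℝ)

/-- `a` is a homogeneous semistable element of slope `μ` and degree `γ`. -/
def IsSemistableAt (μ : WithTop ℝ) (γ : Γ) (a : A) : Prop :=
  a ∈ 𝒜 γ ∧ memSlope μ γ ∧ ∀ β ∈ Lset 𝒜 a, memSlopeLE μ β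

/-- `a` is a homogeneous semistable element of slope `μ`. -/
def IsSemistable (μ : WithTop ℝ) (a : A) : Prop :=
  ∃ γ : Γ, IsSemistableAt 𝒜 μ γ a

/-- `A_μ`: the span of the homogeneous elements of slope `μ`. -/
def Aslope (μ : WithTop ℝ) : Submodule k A :=
  ⨆ γ ∈ {γ : Γ | memSlope μ γ}, 𝒜 γ

/-- `A_{[μ]}`: the span of the semistable elements of slope `μ`. -/
def Asemi (μ : WithTop ℝ) : Submodule k A :=
  Submodule.span k {a : A | IsSemistable 𝒜 μ a}

open Classical in
/-- The projection `p_μ : A → A_μ`. -/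
def pSlope (μ : WithTop ℝ) : A →ₗ[k] A :=
  (DirectSum.toModule k Γ A fun γ => if memSlope μ γ then (𝒜 γ).subtype else 0) ∘ₗ
    (DirectSum.decomposeLinearEquiv 𝒜).toLinearMap

/-- Ordered monomials whose factors have slopes in `J`: products of homogeneous
semistable elements of nonzero degree, with weakly decreasing slopes. -/
def IsOrderedMonomialIn (J : Set (WithTop ℝ)) (a : A) : Prop :=
  ∃ (p : ℕ) (g : Fin p → A) (γ : Fin p → Γ) (μ : Fin p → WithTop ℝ),
    (∀ i, IsSemistableAt 𝒜 (μ i) (γ i) (g i)) ∧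
    (∀ i, (γ i : ℝ × ℝ) ≠ 0) ∧ (∀ i, μ i ∈ J) ∧
    Antitone μ ∧ a = (List.ofFn g).prod

/-- Ordered monomials. -/
def IsOrderedMonomial (a : A) : Prop :=
  IsOrderedMonomialIn 𝒜 Set.univ a

/-- The points of `L(a)`, viewed in `ℝ²`. -/
def Lpts (a : A) : Set (ℝ × ℝ) :=
  (fun γ : Γ => (γ : ℝ × ℝ)) '' Lset 𝒜 a

/-- The polytope `Pol(a)`: the convex hull of `L(a)` in `ℝ²`. -/
def Pol (a : A) : Set (ℝ × ℝ) :=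
  convexHull ℝ (Lpts 𝒜 a)

/-- `Pol^∧(a)` for `a` of degree `γ`: the region between the upper rim of `Pol(a)`
and the straight segment from `0` to `γ`. -/
def PolWedge (a : A) (γ : Γ) : Set (ℝ × ℝ) :=
  {p | (∃ t ∈ Set.Icc (0 : ℝ) 1,
          p.1 = t * (γ : ℝ × ℝ).1 ∧ t * (γ : ℝ × ℝ).2 ≤ p.2) ∧
       (∃ q ∈ Pol 𝒜 a, q.1 = p.1 ∧ p.2 ≤ q.2)}

end MVPaper


/-! ### Auxiliary material for the proof -/

set_option linter.unusedSectionVars false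
set_option maxHeartbeats 1000000

namespace MVPaper

section ProjLemmas

variable {k A : Type} [Field k] [Ring A] [Bialgebra k A]
variable {ι : Type} [AddCommMonoid ι] [DecidableEq ι]
variable (𝒜 : ι → Submodule k A) [DirectSum.Decomposition 𝒜]

lemma proj_apply (γ : ι) (x : A) : proj 𝒜 γ x = (DirectSum.decompose 𝒜 x γ : A) := rfl

lemma proj_mem (γ : ι) (x : A) : proj 𝒜 γ x ∈ 𝒜 γ := (DirectSum.decompose 𝒜 x γ).2

lemma proj_of_mem {γ : ι} {x : A} (hx : x ∈ 𝒜 γ) : proj 𝒜 γ x = x := by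
  rw [proj_apply, DirectSum.decompose_of_mem_same 𝒜 hx]

lemma proj_of_mem_ne {γ γ' : ι} {x : A} (hx : x ∈ 𝒜 γ) (h : γ ≠ γ') : proj 𝒜 γ' x = 0 := by
  rw [proj_apply, DirectSum.decompose_of_mem_ne 𝒜 hx h]

lemma proj_comp_proj_ne {γ γ' : ι} (h : γ ≠ γ') :
    (proj 𝒜 γ') ∘ₗ (proj 𝒜 γ) = 0 :=
  LinearMap.ext fun x => proj_of_mem_ne 𝒜 (proj_mem 𝒜 γ x) h

lemma not_mem_Lset {a : A} {β : ι} (h : β ∉ Lset 𝒜 a) :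
    ∀ δ, projT 𝒜 β δ (Coalgebra.comul (R := k) a) = 0 := by
  intro δ; by_contra h'; exact h ⟨δ, h'⟩

end ProjLemmas

section TensorLemmas

variable {k : Type} [Field k] {M N : Type} [AddCommGroup M] [Module k M]
  [AddCommGroup N] [Module k N]

lemma exists_dual {m : ℕ} {v : Fin m → M} (hv : LinearIndependent k v) :
    ∃ φ : Fin m → (M →ₗ[k] k), ∀ i j, φ i (v j) = if j = i then 1 else 0 := by
  set W := Submodule.span k (Set.range v)
  let B : Module.Basis (Fin m) k W := Module.Basis.span hv
  obtain ⟨q, hq⟩ := W.exists_isCompl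
  refine ⟨fun i => LinearMap.ofIsCompl hq (B.coord i) 0, fun i j => ?_⟩
  have hvj : v j ∈ W := Submodule.subset_span ⟨j, rfl⟩
  have h1 : v j = ((⟨v j, hvj⟩ : W) : M) := rfl
  rw [h1, LinearMap.ofIsCompl_left_apply]
  have h2 : (⟨v j, hvj⟩ : W) = B j := by
    apply Subtype.ext
    exact congrArg Subtype.val (Module.Basis.span_apply hv j).symm
  rw [h2, Module.Basis.coord_apply, Module.Basis.repr_self, Finsupp.single_apply]

lemma sum_tmul_indep_right_eq_zero {m : ℕ} {u : Fin m → M} {v : Fin m → N}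
    (hv : LinearIndependent k v) (h : ∑ i, u i ⊗ₜ[k] v i = (0 : M ⊗[k] N)) :
    ∀ i, u i = 0 := by
  obtain ⟨φ, hφ⟩ := exists_dual hv
  intro i
  let ψ : M ⊗[k] N →ₗ[k] M := TensorProduct.lift (((LinearMap.lsmul k M).comp (φ i)).flip)
  have := congrArg ψ h
  simp only [map_sum, map_zero, ψ, TensorProduct.lift.tmul] at this
  simp only [LinearMap.flip_apply, LinearMap.comp_apply, LinearMap.lsmul_apply, hφ,
    ite_smul, one_smul, zero_smul] at this
  rw [Finset.sum_ite_eq' Finset.univ i u] at this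
  simp only [Finset.mem_univ, if_true] at this; exact this

lemma sum_tmul_indep_left_eq_zero {m : ℕ} {u : Fin m → M} {v : Fin m → N}
    (hu : LinearIndependent k u) (h : ∑ i, u i ⊗ₜ[k] v i = (0 : M ⊗[k] N)) :
    ∀ i, v i = 0 := by
  obtain ⟨φ, hφ⟩ := exists_dual hu
  intro i
  let ψ : M ⊗[k] N →ₗ[k] N := TensorProduct.lift ((LinearMap.lsmul k N).comp (φ i))
  have := congrArg ψ h
  simp only [map_sum, map_zero, ψ, TensorProduct.lift.tmul] at this
  simp only [LinearMap.comp_apply, LinearMap.lsmul_apply, hφ,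
    ite_smul, one_smul, zero_smul] at this
  rw [Finset.sum_ite_eq' Finset.univ i v] at this
  simp only [Finset.mem_univ, if_true] at this; exact this

lemma exists_fin_rep (t : M ⊗[k] N) :
    ∃ (n : ℕ) (x : Fin n → M) (y : Fin n → N), t = ∑ i, x i ⊗ₜ[k] y i := by
  obtain ⟨S, hS⟩ := TensorProduct.exists_finset t
  refine ⟨S.card, fun i => (S.equivFin.symm i).1.1, fun i => (S.equivFin.symm i).1.2, ?_⟩
  rw [hS, ← Finset.sum_coe_sort S (fun p => p.1 ⊗ₜ[k] p.2),
    ← Equiv.sum_comp S.equivFin.symm (fun p : S => (p.1.1 ⊗ₜ[k] p.1.2 : M ⊗[k] N))]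

lemma map_map_apply {k A B M N P Q : Type} [Field k] [AddCommGroup A] [Module k A]
    [AddCommGroup B] [Module k B] [AddCommGroup M] [Module k M] [AddCommGroup N] [Module k N]
    [AddCommGroup P] [Module k P] [AddCommGroup Q] [Module k Q]
    (f : M →ₗ[k] P) (g : N →ₗ[k] Q) (f' : A →ₗ[k] M) (g' : B →ₗ[k] N) (t : A ⊗[k] B) :
    TensorProduct.map f g (TensorProduct.map f' g' t)
      = TensorProduct.map (f ∘ₗ f') (g ∘ₗ g') t := by
  rw [TensorProduct.map_comp]; rfl

end TensorLemmas

section RepLemmas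

variable {k A : Type} [Field k] [AddCommGroup A] [Module k A]

lemma exists_rep_right (X Y : Submodule k A) {n : ℕ} (x y : Fin n → A)
    (hx : ∀ i, x i ∈ X) (hy : ∀ i, y i ∈ Y) :
    ∃ (m : ℕ) (u v : Fin m → A), (∀ i, u i ∈ X) ∧ (∀ i, v i ∈ Y) ∧
      LinearIndependent k v ∧ ∑ i, x i ⊗ₜ[k] y i = ∑ i, u i ⊗ₜ[k] v i := by
  classical
  let B := Module.Basis.ofVectorSpace k Y
  let c : Fin n → (Module.Basis.ofVectorSpaceIndex k Y →₀ k) := fun j => B.repr ⟨y j, hy j⟩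
  let s : Finset (Module.Basis.ofVectorSpaceIndex k Y) := Finset.univ.biUnion fun j => (c j).support
  let e : Fin s.card ≃ s := s.equivFin.symm
  refine ⟨s.card, fun i => ∑ j, c j (e i) • x j, fun i => ((B (e i) : Y) : A),
    fun i => Submodule.sum_mem _ fun j _ => Submodule.smul_mem _ _ (hx j),
    fun i => (B (e i) : Y).2, ?_, ?_⟩
  · have h1 : LinearIndependent k fun i : Fin s.card => B (e i) :=
      B.linearIndependent.comp (fun i => (e i : Module.Basis.ofVectorSpaceIndex k Y))
        (fun i j hij => e.injective (Subtype.ext hij))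
    exact h1.map' Y.subtype (Submodule.ker_subtype Y)
  · have hyj : ∀ j, y j = ∑ b ∈ s, c j b • ((B b : Y) : A) := by
      intro j
      have h0 : (⟨y j, hy j⟩ : Y) = ∑ b ∈ s, c j b • B b := by
        conv_lhs => rw [← B.linearCombination_repr ⟨y j, hy j⟩]
        rw [Finsupp.linearCombination_apply, Finsupp.sum]
        exact Finset.sum_subset (fun b hb => Finset.mem_biUnion.2 ⟨j, Finset.mem_univ j, hb⟩)
          (fun b _ hb => by rw [Finsupp.notMem_support_iff.1 hb, zero_smul])
      have := congrArg (Subtype.val) h0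
      simpa using this
    calc ∑ i, x i ⊗ₜ[k] y i = ∑ j, ∑ b ∈ s, c j b • (x j ⊗ₜ[k] ((B b : Y) : A)) := by
          refine Finset.sum_congr rfl fun j _ => ?_
          rw [hyj j, tmul_sum]
          exact Finset.sum_congr rfl fun b _ => tmul_smul _ _ _
      _ = ∑ b ∈ s, (∑ j, c j b • x j) ⊗ₜ[k] ((B b : Y) : A) := by
          rw [Finset.sum_comm]
          refine Finset.sum_congr rfl fun b _ => ?_
          rw [sum_tmul]
          exact Finset.sum_congr rfl fun j _ => by rw [smul_tmul']
      _ = ∑ i, (∑ j, c j (e i) • x j) ⊗ₜ[k] ((B (e i) : Y) : A) := by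
          rw [← Finset.sum_coe_sort s (fun b => (∑ j, c j b • x j) ⊗ₜ[k] ((B b : Y) : A)),
            ← Equiv.sum_comp e (fun b : s => (∑ j, c j b • x j) ⊗ₜ[k] ((B (b : _) : Y) : A))]

lemma exists_rep_left (X Y : Submodule k A) {n : ℕ} (x y : Fin n → A)
    (hx : ∀ i, x i ∈ X) (hy : ∀ i, y i ∈ Y) :
    ∃ (m : ℕ) (u v : Fin m → A), (∀ i, u i ∈ X) ∧ (∀ i, v i ∈ Y) ∧
      LinearIndependent k u ∧ ∑ i, x i ⊗ₜ[k] y i = ∑ i, u i ⊗ₜ[k] v i := by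
  obtain ⟨m, u, v, hu, hv, hind, heq⟩ := exists_rep_right Y X y x hy hx
  refine ⟨m, v, u, hv, hu, hind, ?_⟩
  have := congrArg (TensorProduct.comm k A A) heq
  simpa [map_sum] using this

end RepLemmas

end MVPaper

namespace MVPaper

/-- half plane condition for a single vector -/
def HPv (v : ℝ × ℝ) : Prop := 0 < v.1 ∨ (v.1 = 0 ∧ 0 ≤ v.2)

def msR (μ : WithTop ℝ) (v : ℝ × ℝ) : Prop := v = 0 ∨ slope v = μ
def leR (μ : WithTop ℝ) (v : ℝ × ℝ) : Prop := v = 0 ∨ slope v ≤ μ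
def geR (μ : WithTop ℝ) (v : ℝ × ℝ) : Prop := v = 0 ∨ μ ≤ slope v

lemma slope_eq_top_iff {v : ℝ × ℝ} : slope v = ⊤ ↔ v.1 = 0 := by
  unfold slope; split_ifs with h <;> simp [h, WithTop.coe_ne_top]

lemma HPv.fst_nonneg {v : ℝ × ℝ} (hv : HPv v) : 0 ≤ v.1 := by
  rcases hv with h | ⟨h, _⟩ <;> linarith

lemma HPv.fst_pos {v : ℝ × ℝ} (hv : HPv v) (h : v.1 ≠ 0) : 0 < v.1 := by
  rcases hv with h' | ⟨h', _⟩
  · exact h'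
  · exact absurd h' h

lemma eq_zero_of_HPv {v : ℝ × ℝ} (hv : HPv v) (h1 : v.1 = 0) (h2 : v.2 ≤ 0) : v = 0 := by
  rcases hv with h | ⟨_, h'⟩
  · exact absurd h1 h.ne'
  · exact Prod.ext h1 (le_antisymm h2 h')

lemma msR_top_iff {v : ℝ × ℝ} : msR ⊤ v ↔ v.1 = 0 := by
  constructor
  · rintro (rfl | h)
    · rfl
    · exact slope_eq_top_iff.1 h
  · intro h; exact Or.inr (slope_eq_top_iff.2 h)

lemma geR_top_iff {v : ℝ × ℝ} : geR ⊤ v ↔ v.1 = 0 := by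
  unfold geR; rw [← msR_top_iff]; unfold msR
  simp [top_le_iff]

lemma leR_top {v : ℝ × ℝ} : leR ⊤ v := Or.inr le_top

lemma msR_coe_iff {v : ℝ × ℝ} (hv : HPv v) (m : ℝ) :
    msR (m : WithTop ℝ) v ↔ (v = 0 ∨ (0 < v.1 ∧ v.2 = m * v.1)) := by
  unfold msR slope
  constructor
  · rintro (rfl | h)
    · exact Or.inl rfl
    · split_ifs at h with h1
      · exact absurd h (by simp [WithTop.coe_ne_top])
      · have h1' := hv.fst_pos h1
        rw [WithTop.coe_inj] at h
        exact Or.inr ⟨h1', by rw [← h]; field_simp⟩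
  · rintro (rfl | ⟨h1, h2⟩)
    · exact Or.inl rfl
    · right; rw [if_neg h1.ne', WithTop.coe_inj, h2]; field_simp
lemma leR_coe_iff {v : ℝ × ℝ} (hv : HPv v) (m : ℝ) :
    leR (m : WithTop ℝ) v ↔ (v = 0 ∨ (0 < v.1 ∧ v.2 ≤ m * v.1)) := by
  unfold leR slope
  constructor
  · rintro (rfl | h)
    · exact Or.inl rfl
    · split_ifs at h with h1
      · exact absurd h (by simp)
      · have h1' := hv.fst_pos h1
        rw [WithTop.coe_le_coe] at h
        exact Or.inr ⟨h1', by rw [div_le_iff₀ h1'] at h; linarith⟩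
  · rintro (rfl | ⟨h1, h2⟩)
    · exact Or.inl rfl
    · right; rw [if_neg h1.ne', WithTop.coe_le_coe, div_le_iff₀ h1]; linarith
lemma geR_coe_iff {v : ℝ × ℝ} (hv : HPv v) (m : ℝ) :
    geR (m : WithTop ℝ) v ↔ (v.1 = 0 ∨ (0 < v.1 ∧ m * v.1 ≤ v.2)) := by
  unfold geR slope
  constructor
  · rintro (rfl | h)
    · exact Or.inl rfl
    · split_ifs at h with h1
      · exact Or.inl h1
      · have h1' := hv.fst_pos h1
        rw [WithTop.coe_le_coe, le_div_iff₀ h1'] at h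
        exact Or.inr ⟨h1', by linarith⟩
  · rintro (h1 | ⟨h1, h2⟩)
    · right; rw [if_pos h1]; exact le_top
    · right; rw [if_neg h1.ne', WithTop.coe_le_coe, le_div_iff₀ h1]; linarith


section Geom
variable {v w : ℝ × ℝ} {μ : WithTop ℝ}

lemma prod_eq_zero_iff {v : ℝ × ℝ} : v = 0 ↔ v.1 = 0 ∧ v.2 = 0 := Prod.ext_iff

lemma prod_eq_zero_iff' {v : ℝ × ℝ} : v = 0 ↔ v.1 = 0 ∧ v.2 = 0 := Prod.ext_iff

lemma add_eq_zero_HPv (hv : HPv v) (hw : HPv w) (h : v + w = 0) : v = 0 ∧ w = 0 := by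
  have h1 : v.1 + w.1 = 0 := congrArg Prod.fst h
  have h2 : v.2 + w.2 = 0 := congrArg Prod.snd h
  have hv1 := hv.fst_nonneg; have hw1 := hw.fst_nonneg
  have hv1' : v.1 = 0 := by linarith
  have hw1' : w.1 = 0 := by linarith
  rcases hv with h' | ⟨_, hv2⟩
  · linarith
  rcases hw with h' | ⟨_, hw2⟩
  · linarith
  exact ⟨prod_eq_zero_iff.2 ⟨hv1', by linarith⟩, prod_eq_zero_iff.2 ⟨hw1', by linarith⟩⟩

lemma msR_add (hv : HPv v) (hw : HPv w) (h1 : msR μ v) (h2 : msR μ w) : msR μ (v + w) := by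
  induction μ using WithTop.recTopCoe with
  | top =>
    rw [msR_top_iff] at h1 h2 ⊢
    simp [Prod.fst_add, h1, h2]
  | coe m =>
    rw [msR_coe_iff hv m] at h1
    rw [msR_coe_iff hw m] at h2
    rw [msR_coe_iff (v := v + w) ?_ m]
    · rcases h1 with rfl | ⟨ha, hb⟩
      · simpa using h2
      rcases h2 with rfl | ⟨hc, hd⟩
      · simpa using Or.inr ⟨ha, hb⟩
      · exact Or.inr ⟨by simp [Prod.fst_add]; linarith,
          by simp [Prod.fst_add, Prod.snd_add]; linarith [hb, hd]⟩
    · rcases h1 with rfl | ⟨ha, _⟩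
      · simpa using hw
      rcases h2 with rfl | ⟨hc, _⟩
      · simpa using hv
      · exact Or.inl (by simp [Prod.fst_add]; linarith)

lemma HPv.add (hv : HPv v) (hw : HPv w) : HPv (v + w) := by
  rcases hv with h | ⟨h, h'⟩ <;> rcases hw with g | ⟨g, g'⟩
  · exact Or.inl (by simp only [Prod.fst_add]; linarith)
  · exact Or.inl (by simp only [Prod.fst_add]; linarith)
  · exact Or.inl (by simp only [Prod.fst_add]; linarith)
  · exact Or.inr ⟨by simp only [Prod.fst_add]; linarith,
      by simp only [Prod.snd_add]; linarith⟩

lemma leR_add (hv : HPv v) (hw : HPv w) (h1 : leR μ v) (h2 : leR μ w) : leR μ (v + w) := by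
  induction μ using WithTop.recTopCoe with
  | top => exact leR_top
  | coe m =>
    rw [leR_coe_iff hv m] at h1
    rw [leR_coe_iff hw m] at h2
    rw [leR_coe_iff (hv.add hw) m]
    rcases h1 with rfl | ⟨ha, hb⟩
    · simpa using h2
    rcases h2 with rfl | ⟨hc, hd⟩
    · simpa using Or.inr ⟨ha, hb⟩
    · exact Or.inr ⟨by simp [Prod.fst_add]; linarith,
        by simp [Prod.fst_add, Prod.snd_add]; linarith [hb, hd]⟩

lemma geR_of_msR_add (hv : HPv v) (hw : HPv w) (h : msR μ (v + w)) (h1 : leR μ v) :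
    geR μ w := by
  induction μ using WithTop.recTopCoe with
  | top =>
    rw [msR_top_iff] at h
    rw [geR_top_iff]
    have := hv.fst_nonneg; have := hw.fst_nonneg
    have : v.1 + w.1 = 0 := h
    linarith
  | coe m =>
    rw [msR_coe_iff (hv.add hw) m] at h
    rw [leR_coe_iff hv m] at h1
    rw [geR_coe_iff hw m]
    rcases h with hz | ⟨ha, hb⟩
    · obtain ⟨_, rfl⟩ := add_eq_zero_HPv hv hw hz
      simp
    simp only [Prod.fst_add] at ha
    simp only [Prod.fst_add, Prod.snd_add] at hb
    rcases h1 with rfl | ⟨hc, hd⟩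
    · simp only [Prod.fst_zero, Prod.snd_zero, zero_add] at ha hb ⊢
      exact Or.inr ⟨ha, le_of_eq hb.symm⟩
    · rcases eq_or_lt_of_le hw.fst_nonneg with hw0 | hw0
      · exact Or.inl hw0.symm
      · exact Or.inr ⟨hw0, by linarith⟩

lemma leR_cancel (hv : HPv v) (hw : HPv w) (h : leR μ (v + w)) (h1 : msR μ v) :
    leR μ w := by
  induction μ using WithTop.recTopCoe with
  | top => exact leR_top
  | coe m =>
    rw [leR_coe_iff (hv.add hw) m] at h
    rw [msR_coe_iff hv m] at h1
    rw [leR_coe_iff hw m]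
    rcases h with hz | ⟨ha, hb⟩
    · obtain ⟨_, rfl⟩ := add_eq_zero_HPv hv hw hz
      simp
    simp only [Prod.fst_add] at ha
    simp only [Prod.fst_add, Prod.snd_add] at hb
    rcases h1 with rfl | ⟨hc, hd⟩
    · simp only [Prod.fst_zero, Prod.snd_zero, zero_add] at ha hb
      exact Or.inr ⟨ha, hb⟩
    · rcases eq_or_lt_of_le hw.fst_nonneg with hw0 | hw0
      · left
        have e0 : m * w.1 = 0 := by rw [← hw0]; ring
        exact eq_zero_of_HPv hw hw0.symm (by nlinarith)
      · exact Or.inr ⟨hw0, by nlinarith⟩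

lemma not_msR_add_le (hv : HPv v) (hw : HPv w)
    (h1 : leR μ v) (h1' : ¬ msR μ v) (h2 : leR μ w) : ¬ msR μ (v + w) := by
  induction μ using WithTop.recTopCoe with
  | top =>
    rw [msR_top_iff] at h1' ⊢
    have := hv.fst_pos h1'
    have := hw.fst_nonneg
    simp only [Prod.fst_add]
    intro h; linarith
  | coe m =>
    rw [leR_coe_iff hv m] at h1
    rw [msR_coe_iff hv m] at h1'
    rw [leR_coe_iff hw m] at h2
    rw [msR_coe_iff (hv.add hw) m]
    push_neg at h1' ⊢
    obtain ⟨h1'0, h1'2⟩ := h1'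
    rcases h1 with rfl | ⟨ha, hb⟩
    · exact absurd rfl h1'0
    have hb' : v.2 < m * v.1 := lt_of_le_of_ne hb (h1'2 ha)
    constructor
    · intro hz
      obtain ⟨hz1, _⟩ := add_eq_zero_HPv hv hw hz
      exact h1'0 hz1
    · intro hpos
      simp only [Prod.fst_add, Prod.snd_add]
      rcases h2 with rfl | ⟨hc, hd⟩
      · simp only [Prod.fst_zero, Prod.snd_zero, add_zero]
        intro h; exact (h1'2 ha) (by linarith)
      · intro h; nlinarith

lemma not_msR_add_ge (hv : HPv v) (hw : HPv w)
    (h1 : geR μ v) (h1' : ¬ msR μ v) (h2 : geR μ w) : ¬ msR μ (v + w) := by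
  induction μ using WithTop.recTopCoe with
  | top =>
    rw [geR_top_iff] at h1
    rw [msR_top_iff] at h1' ⊢
    exact absurd h1 h1'
  | coe m =>
    rw [geR_coe_iff hv m] at h1
    rw [msR_coe_iff hv m] at h1'
    rw [geR_coe_iff hw m] at h2
    rw [msR_coe_iff (hv.add hw) m]
    push_neg at h1' ⊢
    obtain ⟨h1'0, h1'2⟩ := h1'
    constructor
    · intro hz
      obtain ⟨hz1, _⟩ := add_eq_zero_HPv hv hw hz
      exact h1'0 hz1
    intro hpos
    simp only [Prod.fst_add, Prod.snd_add] at hpos ⊢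
    rcases h1 with hv1 | ⟨ha, hb⟩
    · -- v.1 = 0, v ≠ 0 so v.2 > 0
      have hv2 : 0 < v.2 := by
        rcases hv with h | ⟨_, h'⟩
        · linarith
        · rcases lt_or_eq_of_le h' with h'' | h''
          · exact h''
          · exact absurd (Prod.ext hv1 h''.symm) h1'0
      rcases h2 with hw1 | ⟨hc, hd⟩
      · linarith
      · have e0 : m * v.1 = 0 := by rw [hv1]; ring
        intro h; nlinarith
    · have hb' : m * v.1 < v.2 := by
        rcases lt_or_eq_of_le hb with h'' | h''
        · exact h''
        · exact absurd h''.symm (h1'2 ha)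
      rcases h2 with hw1 | ⟨hc, hd⟩
      · rcases hw with h | ⟨_, h'⟩
        · linarith
        · have e0 : m * w.1 = 0 := by rw [‹w.1 = 0›]; ring
          intro h''; nlinarith
      · intro h''; nlinarith

end Geom


end MVPaper

namespace MVPaper

section Machinery

variable {k A : Type} [Field k] [Ring A] [Bialgebra k A]
variable {Γ : AddSubmonoid (ℝ × ℝ)} [DecidableEq Γ]
variable (𝒜 : Γ → Submodule k A) [DirectSum.Decomposition 𝒜]

lemma hpv_of (hHP : HalfPlane Γ) (γ : Γ) : HPv (γ : ℝ × ℝ) := hHP _ γ.2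

lemma coeΓ_add (β δ : Γ) : ((β + δ : Γ) : ℝ × ℝ) = (β : ℝ × ℝ) + (δ : ℝ × ℝ) := rfl

lemma memSlope_msR {μ : WithTop ℝ} {γ : Γ} : memSlope μ γ ↔ msR μ (γ : ℝ × ℝ) := Iff.rfl
lemma memSlopeLE_leR {μ : WithTop ℝ} {γ : Γ} : memSlopeLE μ γ ↔ leR μ (γ : ℝ × ℝ) := Iff.rfl
lemma memSlopeGE_geR {μ : WithTop ℝ} {γ : Γ} : memSlopeGE μ γ ↔ geR μ (γ : ℝ × ℝ) := Iff.rfl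

lemma pSlope_of_mem_of {μ : WithTop ℝ} {γ : Γ} {x : A} (hx : x ∈ 𝒜 γ)
    (h : memSlope μ γ) : pSlope 𝒜 μ x = x := by
  rw [pSlope, LinearMap.comp_apply]
  show (DirectSum.toModule k Γ A fun γ => _) ((DirectSum.decomposeLinearEquiv 𝒜) x) = x
  rw [DirectSum.decomposeLinearEquiv_apply, DirectSum.decompose_of_mem 𝒜 hx,
    ← DirectSum.lof_eq_of k, DirectSum.toModule_lof, if_pos h]
  rfl

lemma pSlope_of_mem_not {μ : WithTop ℝ} {γ : Γ} {x : A} (hx : x ∈ 𝒜 γ)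
    (h : ¬ memSlope μ γ) : pSlope 𝒜 μ x = 0 := by
  rw [pSlope, LinearMap.comp_apply]
  show (DirectSum.toModule k Γ A fun γ => _) ((DirectSum.decomposeLinearEquiv 𝒜) x) = 0
  rw [DirectSum.decomposeLinearEquiv_apply, DirectSum.decompose_of_mem 𝒜 hx,
    ← DirectSum.lof_eq_of k, DirectSum.toModule_lof, if_neg h]
  rfl

lemma proj_comp_proj_same (γ : Γ) : (proj 𝒜 γ) ∘ₗ (proj 𝒜 γ) = proj 𝒜 γ :=
  LinearMap.ext fun x => proj_of_mem 𝒜 (proj_mem 𝒜 γ x)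

lemma projT_projT_same (β δ : Γ) (t : A ⊗[k] A) :
    projT 𝒜 β δ (projT 𝒜 β δ t) = projT 𝒜 β δ t := by
  unfold projT
  rw [map_map_apply, proj_comp_proj_same, proj_comp_proj_same]

lemma projT_projT_ne {β δ β' δ' : Γ} (h : β ≠ β' ∨ δ ≠ δ') (t : A ⊗[k] A) :
    projT 𝒜 β δ (projT 𝒜 β' δ' t) = 0 := by
  unfold projT
  rw [map_map_apply]
  rcases h with h | h
  · rw [proj_comp_proj_ne 𝒜 (Ne.symm h), TensorProduct.map_zero_left, LinearMap.zero_apply]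
  · rw [proj_comp_proj_ne 𝒜 (Ne.symm h), TensorProduct.map_zero_right, LinearMap.zero_apply]

lemma projT_comul_of_not_mem {a : A} {S : Finset (Γ × Γ)}
    (hS : Coalgebra.comul (R := k) a = ∑ p ∈ S, projT 𝒜 p.1 p.2 (Coalgebra.comul (R := k) a))
    {β δ : Γ} (hp : (β, δ) ∉ S) : projT 𝒜 β δ (Coalgebra.comul (R := k) a) = 0 := by
  conv_lhs => rw [hS]
  rw [map_sum]
  refine Finset.sum_eq_zero fun p hp' => projT_projT_ne 𝒜 ?_ _
  by_contra h
  push_neg at h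
  have : p = (β, δ) := Prod.ext h.1.symm h.2.symm
  rw [this] at hp'
  exact hp hp'

/-- the composite `x ↦ projT ε ζ (comul x)` as a linear map. -/
def PT (ε ζ : Γ) : A →ₗ[k] A ⊗[k] A :=
  (TensorProduct.map (proj 𝒜 ε) (proj 𝒜 ζ)).comp (Coalgebra.comul (R := k))

lemma PT_apply (ε ζ : Γ) (z : A) :
    PT 𝒜 ε ζ z = projT 𝒜 ε ζ (Coalgebra.comul (R := k) z) := rfl

lemma PT_comp_proj_zero (hgr : ComulGraded 𝒜) {ε ζ γ : Γ} (h : ε + ζ ≠ γ) :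
    (PT 𝒜 ε ζ) ∘ₗ (proj 𝒜 γ) = 0 :=
  LinearMap.ext fun z => by
    simpa [PT_apply] using hgr γ (proj 𝒜 γ z) (proj_mem 𝒜 γ z) ε ζ h

lemma coassoc_key (ε ζ δ : Γ) (a : A) :
    TensorProduct.map (proj 𝒜 ε) (PT 𝒜 ζ δ) (Coalgebra.comul (R := k) a)
      = TensorProduct.assoc k A A A
          (TensorProduct.map (PT 𝒜 ε ζ) (proj 𝒜 δ) (Coalgebra.comul (R := k) a)) := by
  have h1 : TensorProduct.map (proj 𝒜 ε) (PT 𝒜 ζ δ) (Coalgebra.comul (R := k) a)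
      = TensorProduct.map (proj 𝒜 ε) (TensorProduct.map (proj 𝒜 ζ) (proj 𝒜 δ))
          (LinearMap.lTensor A (Coalgebra.comul (R := k)) (Coalgebra.comul (R := k) a)) := by
    rw [LinearMap.lTensor, map_map_apply, LinearMap.comp_id]; rfl
  rw [h1, ← Coalgebra.coassoc_apply, TensorProduct.map_map_assoc]
  congr 1
  rw [LinearMap.rTensor, map_map_apply, LinearMap.comp_id]; rfl

lemma mem_Lset_of_rep (hgr : ComulGraded 𝒜) (hdec : ComulDecomposes 𝒜)
    {a : A} {β δ : Γ} {m : ℕ} {x y : Fin m → A}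
    (hx : ∀ i, x i ∈ 𝒜 β) (hy : ∀ i, y i ∈ 𝒜 δ) (hind : LinearIndependent k y)
    (hT : projT 𝒜 β δ (Coalgebra.comul (R := k) a) = ∑ i, x i ⊗ₜ[k] y i)
    {j : Fin m} {ε : Γ} (hε : ε ∈ Lset 𝒜 (x j)) : ε ∈ Lset 𝒜 a := by
  obtain ⟨ζ, hζ⟩ := hε
  have hεζ : ε + ζ = β := by
    by_contra h
    exact hζ (hgr β (x j) (hx j) ε ζ h)
  by_contra hnot
  have hnot' := not_mem_Lset 𝒜 hnot
  obtain ⟨S, hS⟩ := hdec a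
  by_cases hmem : (β, δ) ∈ S
  swap
  · have hT0 := projT_comul_of_not_mem 𝒜 hS hmem
    rw [hT0] at hT
    have hx0 := sum_tmul_indep_right_eq_zero hind hT.symm j
    exact hζ (by rw [hx0, map_zero, map_zero])
  have hE0 : TensorProduct.map (proj 𝒜 ε) (PT 𝒜 ζ δ) (Coalgebra.comul (R := k) a) = 0 := by
    conv_lhs => rw [hS]
    rw [map_sum]
    refine Finset.sum_eq_zero fun p hp => ?_
    by_cases h1 : p.1 = ε
    · rw [h1, hnot' p.2, map_zero]
    · unfold projT
      rw [map_map_apply, proj_comp_proj_ne 𝒜 h1, TensorProduct.map_zero_left,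
        LinearMap.zero_apply]
  have hEker : TensorProduct.map (PT 𝒜 ε ζ) (proj 𝒜 δ) (Coalgebra.comul (R := k) a)
      = ∑ i, (PT 𝒜 ε ζ) (x i) ⊗ₜ[k] y i := by
    conv_lhs => rw [hS]
    rw [map_sum]
    have hside : ∀ p ∈ S, p ≠ (β, δ) →
        TensorProduct.map (PT 𝒜 ε ζ) (proj 𝒜 δ)
          (projT 𝒜 p.1 p.2 (Coalgebra.comul (R := k) a)) = 0 := by
      intro p hp hne
      by_cases h2 : p.2 = δ
      · have h1 : p.1 ≠ β := fun hh => hne (Prod.ext hh h2)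
        have hne' : ε + ζ ≠ p.1 := by rw [hεζ]; exact fun hh => h1 hh.symm
        unfold projT
        rw [map_map_apply, PT_comp_proj_zero 𝒜 hgr hne', TensorProduct.map_zero_left,
          LinearMap.zero_apply]
      · unfold projT
        rw [map_map_apply, proj_comp_proj_ne 𝒜 h2, TensorProduct.map_zero_right,
          LinearMap.zero_apply]
    rw [Finset.sum_eq_single_of_mem (β, δ) hmem hside]
    rw [hT, map_sum]
    refine Finset.sum_congr rfl fun i _ => ?_
    rw [TensorProduct.map_tmul, proj_of_mem 𝒜 (hy i)]
  have hkey := coassoc_key 𝒜 ε ζ δ a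
  rw [hE0, hEker] at hkey
  have hzero := (LinearEquiv.map_eq_zero_iff (TensorProduct.assoc k A A A)).mp hkey.symm
  have hzj := sum_tmul_indep_right_eq_zero hind hzero j
  exact hζ (by rw [← PT_apply, hzj])

lemma add_mem_Lset_of_rep (hgr : ComulGraded 𝒜) (hdec : ComulDecomposes 𝒜)
    {a : A} {β δ : Γ} {m : ℕ} {x y : Fin m → A}
    (hx : ∀ i, x i ∈ 𝒜 β) (hy : ∀ i, y i ∈ 𝒜 δ) (hind : LinearIndependent k x)
    (hT : projT 𝒜 β δ (Coalgebra.comul (R := k) a) = ∑ i, x i ⊗ₜ[k] y i)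
    {j : Fin m} {ε : Γ} (hε : ε ∈ Lset 𝒜 (y j)) : β + ε ∈ Lset 𝒜 a := by
  obtain ⟨ζ, hζ⟩ := hε
  have hεζ : ε + ζ = δ := by
    by_contra h
    exact hζ (hgr δ (y j) (hy j) ε ζ h)
  by_contra hnot
  have hnot' := not_mem_Lset 𝒜 hnot
  obtain ⟨S, hS⟩ := hdec a
  by_cases hmem : (β, δ) ∈ S
  swap
  · have hT0 := projT_comul_of_not_mem 𝒜 hS hmem
    rw [hT0] at hT
    have hy0 := sum_tmul_indep_left_eq_zero hind hT.symm j
    exact hζ (by rw [hy0, map_zero, map_zero])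
  have hE0 : TensorProduct.map (PT 𝒜 β ε) (proj 𝒜 ζ) (Coalgebra.comul (R := k) a) = 0 := by
    conv_lhs => rw [hS]
    rw [map_sum]
    refine Finset.sum_eq_zero fun p hp => ?_
    by_cases h1 : p.1 = β + ε
    · rw [h1, hnot' p.2, map_zero]
    · unfold projT
      rw [map_map_apply, PT_comp_proj_zero 𝒜 hgr (fun hh => h1 hh.symm),
        TensorProduct.map_zero_left, LinearMap.zero_apply]
  have hEker : TensorProduct.map (proj 𝒜 β) (PT 𝒜 ε ζ) (Coalgebra.comul (R := k) a)
      = ∑ i, x i ⊗ₜ[k] (PT 𝒜 ε ζ) (y i) := by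
    conv_lhs => rw [hS]
    rw [map_sum]
    have hside : ∀ p ∈ S, p ≠ (β, δ) →
        TensorProduct.map (proj 𝒜 β) (PT 𝒜 ε ζ)
          (projT 𝒜 p.1 p.2 (Coalgebra.comul (R := k) a)) = 0 := by
      intro p hp hne
      by_cases h2 : p.1 = β
      · have h1 : p.2 ≠ δ := fun hh => hne (Prod.ext h2 hh)
        have hne' : ε + ζ ≠ p.2 := by rw [hεζ]; exact fun hh => h1 hh.symm
        unfold projT
        rw [map_map_apply, PT_comp_proj_zero 𝒜 hgr hne', TensorProduct.map_zero_right,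
          LinearMap.zero_apply]
      · unfold projT
        rw [map_map_apply, proj_comp_proj_ne 𝒜 h2, TensorProduct.map_zero_left,
          LinearMap.zero_apply]
    rw [Finset.sum_eq_single_of_mem (β, δ) hmem hside]
    rw [hT, map_sum]
    refine Finset.sum_congr rfl fun i _ => ?_
    rw [TensorProduct.map_tmul, proj_of_mem 𝒜 (hx i)]
  have hkey := coassoc_key 𝒜 β ε ζ a
  rw [hE0, hEker] at hkey
  have ha0 : (TensorProduct.assoc k A A A) (0 : (A ⊗[k] A) ⊗[k] A) = 0 :=
    (TensorProduct.assoc k A A A).toLinearMap.map_zero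
  rw [ha0] at hkey
  have hzj := sum_tmul_indep_left_eq_zero hind hkey j
  exact hζ (by rw [← PT_apply, hzj])


variable [SetLike.GradedMonoid 𝒜]

lemma Q_projT_of {μ : WithTop ℝ} {β δ : Γ} (h1 : memSlope μ β) (h2 : memSlope μ δ)
    (s : A ⊗[k] A) :
    TensorProduct.map (pSlope 𝒜 μ) (pSlope 𝒜 μ) (projT 𝒜 β δ s) = projT 𝒜 β δ s := by
  induction s using TensorProduct.induction_on with
  | zero => rw [map_zero, map_zero]
  | tmul u v =>
    unfold projT
    rw [TensorProduct.map_tmul, TensorProduct.map_tmul,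
      pSlope_of_mem_of 𝒜 (proj_mem 𝒜 β u) h1, pSlope_of_mem_of 𝒜 (proj_mem 𝒜 δ v) h2]
  | add s t hs ht => rw [map_add, map_add, hs, ht]

lemma Q_projT_not {μ : WithTop ℝ} {β δ : Γ} (h : ¬ (memSlope μ β ∧ memSlope μ δ))
    (s : A ⊗[k] A) :
    TensorProduct.map (pSlope 𝒜 μ) (pSlope 𝒜 μ) (projT 𝒜 β δ s) = 0 := by
  induction s using TensorProduct.induction_on with
  | zero => rw [map_zero, map_zero]
  | tmul u v =>
    unfold projT
    rw [TensorProduct.map_tmul, TensorProduct.map_tmul]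
    rcases not_and_or.mp h with h' | h'
    · rw [pSlope_of_mem_not 𝒜 (proj_mem 𝒜 β u) h', TensorProduct.zero_tmul]
    · rw [pSlope_of_mem_not 𝒜 (proj_mem 𝒜 δ v) h', TensorProduct.tmul_zero]
  | add s t hs ht => rw [map_add, map_add, hs, ht, add_zero]

lemma projT_mul_projT_ne {ε ζ β δ β' δ' : Γ} (h : ε ≠ β + β' ∨ ζ ≠ δ + δ')
    (s s' : A ⊗[k] A) :
    projT 𝒜 ε ζ (projT 𝒜 β δ s * projT 𝒜 β' δ' s') = 0 := by
  induction s using TensorProduct.induction_on with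
  | zero => rw [map_zero, zero_mul, map_zero]
  | add s t hs ht => rw [map_add, add_mul, map_add, hs, ht, add_zero]
  | tmul u v =>
    induction s' using TensorProduct.induction_on with
    | zero => rw [map_zero, mul_zero, map_zero]
    | add s t hs ht => rw [map_add, mul_add, map_add, hs, ht, add_zero]
    | tmul u' v' =>
      unfold projT
      rw [TensorProduct.map_tmul, TensorProduct.map_tmul,
        Algebra.TensorProduct.tmul_mul_tmul, TensorProduct.map_tmul]
      rcases h with h | h
      · rw [proj_of_mem_ne 𝒜
          (SetLike.mul_mem_graded (proj_mem 𝒜 β u) (proj_mem 𝒜 β' u')) (Ne.symm h),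
          TensorProduct.zero_tmul]
      · rw [proj_of_mem_ne 𝒜
          (SetLike.mul_mem_graded (proj_mem 𝒜 δ v) (proj_mem 𝒜 δ' v')) (Ne.symm h),
          TensorProduct.tmul_zero]

lemma Q_projT_mul_of {μ : WithTop ℝ} {β δ β' δ' : Γ}
    (h1 : memSlope μ (β + β')) (h2 : memSlope μ (δ + δ')) (s s' : A ⊗[k] A) :
    TensorProduct.map (pSlope 𝒜 μ) (pSlope 𝒜 μ) (projT 𝒜 β δ s * projT 𝒜 β' δ' s')
      = projT 𝒜 β δ s * projT 𝒜 β' δ' s' := by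
  induction s using TensorProduct.induction_on with
  | zero => rw [map_zero, zero_mul, map_zero]
  | add s t hs ht => rw [map_add, add_mul, map_add, hs, ht]
  | tmul u v =>
    induction s' using TensorProduct.induction_on with
    | zero => rw [map_zero, mul_zero, map_zero]
    | add s t hs ht => rw [map_add, mul_add, map_add, hs, ht]
    | tmul u' v' =>
      unfold projT
      rw [TensorProduct.map_tmul, TensorProduct.map_tmul,
        Algebra.TensorProduct.tmul_mul_tmul, TensorProduct.map_tmul,
        pSlope_of_mem_of 𝒜
          (SetLike.mul_mem_graded (proj_mem 𝒜 β u) (proj_mem 𝒜 β' u')) h1,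
        pSlope_of_mem_of 𝒜
          (SetLike.mul_mem_graded (proj_mem 𝒜 δ v) (proj_mem 𝒜 δ' v')) h2]

lemma Q_projT_mul_not {μ : WithTop ℝ} {β δ β' δ' : Γ}
    (h : ¬ memSlope μ (β + β') ∨ ¬ memSlope μ (δ + δ')) (s s' : A ⊗[k] A) :
    TensorProduct.map (pSlope 𝒜 μ) (pSlope 𝒜 μ) (projT 𝒜 β δ s * projT 𝒜 β' δ' s')
      = 0 := by
  induction s using TensorProduct.induction_on with
  | zero => rw [map_zero, zero_mul, map_zero]
  | add s t hs ht => rw [map_add, add_mul, map_add, hs, ht, add_zero]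
  | tmul u v =>
    induction s' using TensorProduct.induction_on with
    | zero => rw [map_zero, mul_zero, map_zero]
    | add s t hs ht => rw [map_add, mul_add, map_add, hs, ht, add_zero]
    | tmul u' v' =>
      unfold projT
      rw [TensorProduct.map_tmul, TensorProduct.map_tmul,
        Algebra.TensorProduct.tmul_mul_tmul, TensorProduct.map_tmul]
      rcases h with h' | h'
      · rw [pSlope_of_mem_not 𝒜
          (SetLike.mul_mem_graded (proj_mem 𝒜 β u) (proj_mem 𝒜 β' u')) h',
          TensorProduct.zero_tmul]
      · rw [pSlope_of_mem_not 𝒜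
          (SetLike.mul_mem_graded (proj_mem 𝒜 δ v) (proj_mem 𝒜 δ' v')) h',
          TensorProduct.tmul_zero]

lemma core_term (hHP : HalfPlane Γ) (hgr : ComulGraded 𝒜) (hdec : ComulDecomposes 𝒜)
    {μ : WithTop ℝ} {a : A} {γa : Γ} (ha : IsSemistableAt 𝒜 μ γa a)
    {β δ : Γ} (hβ : memSlope μ β) (hδ : memSlope μ δ) :
    projT 𝒜 β δ (Coalgebra.comul (R := k) a) ∈
      LinearMap.range (TensorProduct.map (Asemi 𝒜 μ).subtype (Asemi 𝒜 μ).subtype) := by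
  obtain ⟨n, x0, y0, h0⟩ := exists_fin_rep (Coalgebra.comul (R := k) a)
  have hT0 : projT 𝒜 β δ (Coalgebra.comul (R := k) a)
      = ∑ i, proj 𝒜 β (x0 i) ⊗ₜ[k] proj 𝒜 δ (y0 i) := by
    rw [h0]
    unfold projT
    rw [map_sum]
    exact Finset.sum_congr rfl fun i _ => TensorProduct.map_tmul _ _ _ _
  obtain ⟨m1, x1, y1, hx1, hy1, hind1, heq1⟩ :=
    exists_rep_right (𝒜 β) (𝒜 δ) (fun i => proj 𝒜 β (x0 i)) (fun i => proj 𝒜 δ (y0 i))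
      (fun i => proj_mem 𝒜 β (x0 i)) (fun i => proj_mem 𝒜 δ (y0 i))
  have hT1 : projT 𝒜 β δ (Coalgebra.comul (R := k) a) = ∑ i, x1 i ⊗ₜ[k] y1 i :=
    hT0.trans heq1
  have hx1s : ∀ i, IsSemistable 𝒜 μ (x1 i) := fun i =>
    ⟨β, hx1 i, hβ, fun ε hε => ha.2.2 ε (mem_Lset_of_rep 𝒜 hgr hdec hx1 hy1 hind1 hT1 hε)⟩
  obtain ⟨m2, u, v, hu, hv, hind2, heq2⟩ :=
    exists_rep_left ((𝒜 β) ⊓ Submodule.span k (Set.range x1)) (𝒜 δ) x1 y1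
      (fun i => ⟨hx1 i, Submodule.subset_span ⟨i, rfl⟩⟩) hy1
  have hT2 : projT 𝒜 β δ (Coalgebra.comul (R := k) a) = ∑ i, u i ⊗ₜ[k] v i :=
    hT1.trans heq2
  have hvs : ∀ i, IsSemistable 𝒜 μ (v i) := by
    intro i
    refine ⟨δ, hv i, hδ, fun ε hε => ?_⟩
    have hadd : β + ε ∈ Lset 𝒜 a :=
      add_mem_Lset_of_rep 𝒜 hgr hdec (fun i => (hu i).1) hv hind2 hT2 hε
    have hle : memSlopeLE μ (β + ε) := ha.2.2 _ hadd
    exact leR_cancel (hpv_of hHP β) (hpv_of hHP ε) hle hβ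
  have hxmem : ∀ i, u i ∈ Asemi 𝒜 μ := by
    intro i
    have hsub : Submodule.span k (Set.range x1) ≤ Asemi 𝒜 μ := by
      refine Submodule.span_le.2 ?_
      rintro z ⟨i, rfl⟩
      exact Submodule.subset_span (hx1s i)
    exact hsub (hu i).2
  have hvmem : ∀ i, v i ∈ Asemi 𝒜 μ := fun i => Submodule.subset_span (hvs i)
  rw [hT2]
  refine Submodule.sum_mem _ fun i _ => ?_
  exact ⟨(⟨u i, hxmem i⟩ : Asemi 𝒜 μ) ⊗ₜ[k] (⟨v i, hvmem i⟩ : Asemi 𝒜 μ),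
    TensorProduct.map_tmul _ _ _ _⟩


lemma one_isSemistable (hHP : HalfPlane Γ) (hgr : ComulGraded 𝒜) (μ : WithTop ℝ) :
    IsSemistable 𝒜 μ (1 : A) := by
  refine ⟨0, SetLike.one_mem_graded 𝒜, Or.inl (by simp), fun β hβ => ?_⟩
  obtain ⟨ζ, hζ⟩ := hβ
  have h0 : β + ζ = 0 := by
    by_contra h
    exact hζ (hgr 0 1 (SetLike.one_mem_graded 𝒜) β ζ h)
  have h0' : (β : ℝ × ℝ) + (ζ : ℝ × ℝ) = 0 := by
    rw [← coeΓ_add, h0]; simp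
  exact Or.inl (add_eq_zero_HPv (hpv_of hHP β) (hpv_of hHP ζ) h0').1

lemma isSemistable_mul (hHP : HalfPlane Γ) (hgr : ComulGraded 𝒜) (hdec : ComulDecomposes 𝒜)
    {μ : WithTop ℝ} {a b : A} (ha : IsSemistable 𝒜 μ a) (hb : IsSemistable 𝒜 μ b) :
    IsSemistable 𝒜 μ (a * b) := by
  obtain ⟨γa, ha1, ha2, ha3⟩ := ha
  obtain ⟨γb, hb1, hb2, hb3⟩ := hb
  refine ⟨γa + γb, SetLike.mul_mem_graded ha1 hb1,
    msR_add (hpv_of hHP γa) (hpv_of hHP γb) ha2 hb2, fun ε hε => ?_⟩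
  obtain ⟨ζ, hζ⟩ := hε
  rw [Bialgebra.comul_mul] at hζ
  obtain ⟨Sa, hSa⟩ := hdec a
  obtain ⟨Sb, hSb⟩ := hdec b
  rw [hSa, hSb, Finset.sum_mul_sum] at hζ
  simp only [map_sum] at hζ
  obtain ⟨p, hp, hne1⟩ := Finset.exists_ne_zero_of_sum_ne_zero hζ
  obtain ⟨q, hq, hne2⟩ := Finset.exists_ne_zero_of_sum_ne_zero hne1
  have hTp : projT 𝒜 p.1 p.2 (Coalgebra.comul (R := k) a) ≠ 0 := by
    intro h; exact hne2 (by rw [h, zero_mul, map_zero])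
  have hTq : projT 𝒜 q.1 q.2 (Coalgebra.comul (R := k) b) ≠ 0 := by
    intro h; exact hne2 (by rw [h, mul_zero, map_zero])
  have hεeq : ε = p.1 + q.1 := by
    by_contra h
    exact hne2 (projT_mul_projT_ne 𝒜 (Or.inl h) _ _)
  have h1 : memSlopeLE μ p.1 := ha3 p.1 ⟨p.2, hTp⟩
  have h2 : memSlopeLE μ q.1 := hb3 q.1 ⟨q.2, hTq⟩
  rw [hεeq]
  exact leR_add (hpv_of hHP p.1) (hpv_of hHP q.1) h1 h2

lemma map_pSlope_comul_mul (hHP : HalfPlane Γ) (hgr : ComulGraded 𝒜)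
    (hdec : ComulDecomposes 𝒜) {μ : WithTop ℝ} {a b : A} {γa γb : Γ}
    (ha : IsSemistableAt 𝒜 μ γa a) (hb : IsSemistableAt 𝒜 μ γb b) :
    TensorProduct.map (pSlope 𝒜 μ) (pSlope 𝒜 μ) (Coalgebra.comul (R := k) (a * b))
      = TensorProduct.map (pSlope 𝒜 μ) (pSlope 𝒜 μ) (Coalgebra.comul (R := k) a)
        * TensorProduct.map (pSlope 𝒜 μ) (pSlope 𝒜 μ) (Coalgebra.comul (R := k) b) := by
  obtain ⟨ha1, ha2, ha3⟩ := ha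
  obtain ⟨hb1, hb2, hb3⟩ := hb
  obtain ⟨Sa, hSa⟩ := hdec a
  obtain ⟨Sb, hSb⟩ := hdec b
  rw [Bialgebra.comul_mul]
  conv_lhs => rw [hSa, hSb, Finset.sum_mul_sum]
  conv_rhs => rw [hSa, hSb]
  simp only [map_sum]
  rw [Finset.sum_mul_sum]
  refine Finset.sum_congr rfl fun p hp => Finset.sum_congr rfl fun q hq => ?_
  by_cases hTp : projT 𝒜 p.1 p.2 (Coalgebra.comul (R := k) a) = 0
  · rw [hTp, zero_mul, map_zero, zero_mul]
  by_cases hTq : projT 𝒜 q.1 q.2 (Coalgebra.comul (R := k) b) = 0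
  · rw [hTq, mul_zero, map_zero, mul_zero]
  have hpsum : p.1 + p.2 = γa := by
    by_contra h; exact hTp (hgr γa a ha1 p.1 p.2 h)
  have hqsum : q.1 + q.2 = γb := by
    by_contra h; exact hTq (hgr γb b hb1 q.1 q.2 h)
  have hL1 : memSlopeLE μ p.1 := ha3 p.1 ⟨p.2, hTp⟩
  have hL2 : memSlopeLE μ q.1 := hb3 q.1 ⟨q.2, hTq⟩
  have hG1 : memSlopeGE μ p.2 := by
    have hms : msR μ ((p.1 : ℝ × ℝ) + (p.2 : ℝ × ℝ)) := by
      rw [← coeΓ_add, hpsum]; exact ha2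
    exact geR_of_msR_add (hpv_of hHP p.1) (hpv_of hHP p.2) hms hL1
  have hG2 : memSlopeGE μ q.2 := by
    have hms : msR μ ((q.1 : ℝ × ℝ) + (q.2 : ℝ × ℝ)) := by
      rw [← coeΓ_add, hqsum]; exact hb2
    exact geR_of_msR_add (hpv_of hHP q.1) (hpv_of hHP q.2) hms hL2
  by_cases m1 : memSlope μ p.1
  case neg =>
    have hm : ¬ memSlope μ (p.1 + q.1) :=
      not_msR_add_le (hpv_of hHP p.1) (hpv_of hHP q.1) hL1 m1 hL2
    rw [Q_projT_mul_not 𝒜 (Or.inl hm), Q_projT_not 𝒜 (fun hc => m1 hc.1), zero_mul]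
  by_cases m2 : memSlope μ p.2
  case neg =>
    have hm : ¬ memSlope μ (p.2 + q.2) :=
      not_msR_add_ge (hpv_of hHP p.2) (hpv_of hHP q.2) hG1 m2 hG2
    rw [Q_projT_mul_not 𝒜 (Or.inr hm), Q_projT_not 𝒜 (fun hc => m2 hc.2), zero_mul]
  by_cases m3 : memSlope μ q.1
  case neg =>
    have hm' : ¬ msR μ ((q.1 : ℝ × ℝ) + (p.1 : ℝ × ℝ)) :=
      not_msR_add_le (hpv_of hHP q.1) (hpv_of hHP p.1) hL2 m3 hL1
    have hm : ¬ memSlope μ (p.1 + q.1) := by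
      rw [memSlope_msR, coeΓ_add, add_comm]; exact hm'
    rw [Q_projT_mul_not 𝒜 (Or.inl hm), Q_projT_not 𝒜 (fun hc => m3 hc.1), mul_zero]
  by_cases m4 : memSlope μ q.2
  case neg =>
    have hm' : ¬ msR μ ((q.2 : ℝ × ℝ) + (p.2 : ℝ × ℝ)) :=
      not_msR_add_ge (hpv_of hHP q.2) (hpv_of hHP p.2) hG2 m4 hG1
    have hm : ¬ memSlope μ (p.2 + q.2) := by
      rw [memSlope_msR, coeΓ_add, add_comm]; exact hm'
    rw [Q_projT_mul_not 𝒜 (Or.inr hm), Q_projT_not 𝒜 (fun hc => m4 hc.2), mul_zero]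
  rw [Q_projT_mul_of 𝒜 (msR_add (hpv_of hHP p.1) (hpv_of hHP q.1) m1 m3)
      (msR_add (hpv_of hHP p.2) (hpv_of hHP q.2) m2 m4),
    Q_projT_of 𝒜 m1 m2, Q_projT_of 𝒜 m3 m4]

end Machinery

end MVPaper
open MVPaper in
/-- `A_{[μ]}` is a subalgebra of `A_μ`, and
`Δ_μ = (p_μ ⊗ p_μ) ∘ Δ` maps `A_{[μ]}` into `A_{[μ]} ⊗ A_{[μ]}`; `A_{[μ]}` thereby becomes
a bialgebra with coproduct `Δ_μ` (in particular `Δ_μ` is multiplicative on `A_{[μ]}`). -/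
theorem prop_StableBialgebras
    {k A : Type} [Field k] [Ring A] [Bialgebra k A]
    {Γ : AddSubmonoid (ℝ × ℝ)} [DecidableEq Γ]
    (𝒜 : Γ → Submodule k A) [DirectSum.Decomposition 𝒜] [SetLike.GradedMonoid 𝒜]
    (hHP : HalfPlane Γ) (hdisc : DiscreteTopology Γ)
    (hconn : GradedConnected 𝒜) (hgr : ComulGraded 𝒜) (hdec : ComulDecomposes 𝒜)
    (μ : WithTop ℝ) :
    ((1 : A) ∈ Asemi 𝒜 μ) ∧
    (Asemi 𝒜 μ ≤ Aslope 𝒜 μ) ∧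
    (∀ a ∈ Asemi 𝒜 μ, ∀ b ∈ Asemi 𝒜 μ, a * b ∈ Asemi 𝒜 μ) ∧
    (∀ a ∈ Asemi 𝒜 μ,
      TensorProduct.map (pSlope 𝒜 μ) (pSlope 𝒜 μ) (Coalgebra.comul (R := k) a) ∈
        LinearMap.range (TensorProduct.map (Asemi 𝒜 μ).subtype (Asemi 𝒜 μ).subtype)) ∧
    (∀ a ∈ Asemi 𝒜 μ, ∀ b ∈ Asemi 𝒜 μ,
      TensorProduct.map (pSlope 𝒜 μ) (pSlope 𝒜 μ) (Coalgebra.comul (R := k) (a * b)) =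
        TensorProduct.map (pSlope 𝒜 μ) (pSlope 𝒜 μ) (Coalgebra.comul (R := k) a) *
        TensorProduct.map (pSlope 𝒜 μ) (pSlope 𝒜 μ) (Coalgebra.comul (R := k) b)) := by
  classical
  refine ⟨?_, ?_, ?_, ?_, ?_⟩
  · exact Submodule.subset_span (one_isSemistable 𝒜 hHP hgr μ)
  · refine Submodule.span_le.2 ?_
    rintro a ⟨γ, h1, h2, h3⟩
    exact Submodule.mem_iSup_of_mem γ (Submodule.mem_iSup_of_mem h2 h1)
  · intro a ha b hb
    refine Submodule.span_induction₂
      (p := fun x y _ _ => x * y ∈ Asemi 𝒜 μ) ?_ ?_ ?_ ?_ ?_ ?_ ?_ ha hb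
    · exact fun x y hx hy =>
        Submodule.subset_span (isSemistable_mul 𝒜 hHP hgr hdec hx hy)
    · intro y _; rw [zero_mul]; exact zero_mem _
    · intro x _; rw [mul_zero]; exact zero_mem _
    · intro x y z _ _ _ h1 h2; rw [add_mul]; exact add_mem h1 h2
    · intro x y z _ _ _ h1 h2; rw [mul_add]; exact add_mem h1 h2
    · intro r x y _ _ h; rw [smul_mul_assoc]; exact Submodule.smul_mem _ _ h
    · intro r x y _ _ h; rw [mul_smul_comm]; exact Submodule.smul_mem _ _ h
  · intro a ha
    induction ha using Submodule.span_induction with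
    | mem a h =>
      obtain ⟨γa, hss⟩ := h
      obtain ⟨S, hS⟩ := hdec a
      rw [hS, map_sum]
      refine Submodule.sum_mem _ fun p _ => ?_
      by_cases hm : memSlope μ p.1 ∧ memSlope μ p.2
      · rw [Q_projT_of 𝒜 hm.1 hm.2]
        exact core_term 𝒜 hHP hgr hdec hss hm.1 hm.2
      · rw [Q_projT_not 𝒜 hm]
        exact zero_mem _
    | zero => rw [map_zero, map_zero]; exact zero_mem _
    | add x y _ _ h1 h2 => rw [map_add, map_add]; exact add_mem h1 h2
    | smul r x _ h => rw [map_smul, map_smul]; exact Submodule.smul_mem _ _ h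
  · intro a ha b hb
    refine Submodule.span_induction₂
      (p := fun x y _ _ =>
        TensorProduct.map (pSlope 𝒜 μ) (pSlope 𝒜 μ) (Coalgebra.comul (R := k) (x * y)) =
          TensorProduct.map (pSlope 𝒜 μ) (pSlope 𝒜 μ) (Coalgebra.comul (R := k) x) *
          TensorProduct.map (pSlope 𝒜 μ) (pSlope 𝒜 μ) (Coalgebra.comul (R := k) y))
      ?_ ?_ ?_ ?_ ?_ ?_ ?_ ha hb
    · intro x y hx hy
      obtain ⟨γx, hx'⟩ := hx
      obtain ⟨γy, hy'⟩ := hy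
      exact map_pSlope_comul_mul 𝒜 hHP hgr hdec hx' hy'
    · intro y _; simp
    · intro x _; simp
    · intro x y z _ _ _ h1 h2
      simp only [add_mul, map_add]
      rw [h1, h2]
    · intro x y z _ _ _ h1 h2
      simp only [mul_add, map_add]
      rw [h1, h2]
    · intro r x y _ _ h
      simp only [smul_mul_assoc, map_smul]
      rw [h]
    · intro r x y _ _ h
      simp only [mul_smul_comm, map_smul]
      rw [h]
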